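/- For every complex number ρ, the characteristic polynomial of ZeroSNet with the optimal coefficients factors as ρ³ − (1/3)ρ² − (5/9)ρ − (1/9) = (ρ − 1)·(ρ + 1/3)². Consequently its complex roots are exactly 1 (a simple root) and −1/3 (a double root), so the moduli of its roots are 1, 1/3, and 1/3. -/

import Mathlib

open Polynomial

/-- The characteristic polynomial of ZeroSNet with optimal coefficients, as a polynomial
over ℂ: `ρ³ − (1/3)ρ² − (5/9)ρ − 1/9`. -/
noncomputable def zerosOptCharPoly : Polynomial ℂ :=
  X ^ 3 - C (1 / 3) * X ^ 2 - C (5 / 9) * X - C (1 / 9)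

/-- The ZeroSNet characteristic polynomial with optimal coefficients factors as
`ρ³ − (1/3)ρ² − (5/9)ρ − 1/9 = (ρ − 1)(ρ + 1/3)²`; its complex roots are exactly `1`
(a simple root) and `−1/3` (a double root), whose moduli are `1` and `1/3`. -/
theorem zerosnet_optimal_charpoly_roots :
    (∀ ρ : ℂ, ρ ^ 3 - (1 / 3) * ρ ^ 2 - (5 / 9) * ρ - 1 / 9
      = (ρ - 1) * (ρ + 1 / 3) ^ 2) ∧
    (∀ z : ℂ, z ^ 3 - (1 / 3) * z ^ 2 - (5 / 9) * z - 1 / 9 = 0 ↔ z = 1 ∨ z = -1 / 3) ∧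
    zerosOptCharPoly.rootMultiplicity 1 = 1 ∧
    zerosOptCharPoly.rootMultiplicity (-1 / 3) = 2 ∧
    ‖(1 : ℂ)‖ = 1 ∧ ‖(-1 / 3 : ℂ)‖ = 1 / 3 := by
  have hfac : ∀ ρ : ℂ, ρ ^ 3 - (1 / 3) * ρ ^ 2 - (5 / 9) * ρ - 1 / 9
      = (ρ - 1) * (ρ + 1 / 3) ^ 2 := by intro ρ; ring
  have hpoly : zerosOptCharPoly = (X - C 1) * (X - C (-1/3 : ℂ)) ^ 2 := by
    apply Polynomial.funext
    intro z
    simp [zerosOptCharPoly]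
    ring
  have hne : (X - C (1:ℂ)) * (X - C (-1/3 : ℂ)) ^ 2 ≠ 0 := by
    intro h
    have := congrArg (Polynomial.eval 2) h
    simp at this
    norm_num at this
  refine ⟨hfac, ?_, ?_, ?_, ?_, ?_⟩
  · intro z
    rw [hfac z]
    constructor
    · intro h
      rcases mul_eq_zero.mp h with h1 | h2
      · left; linear_combination h1
      · right; have := pow_eq_zero_iff (n := 2) (by norm_num) |>.mp h2
        linear_combination this
    · rintro (rfl | rfl) <;> norm_num
  · rw [hpoly, rootMultiplicity_mul hne, rootMultiplicity_X_sub_C_self,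
      rootMultiplicity_eq_zero (by simp [IsRoot]; norm_num)]
  · rw [hpoly, rootMultiplicity_mul hne, rootMultiplicity_X_sub_C_pow,
      rootMultiplicity_eq_zero (by simp [IsRoot]; norm_num)]
  · simp
  · rw [show (-1/3 : ℂ) = -(1/3) by ring]
    rw [norm_neg, norm_div]
    simp
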